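/- For every θ ∈ (0,1/2] there is a constant C > 0 such that for all ε ∈ (0,1], all t ≥ 0 and all r ≥ 1 with 2εr ≤ ε^θ, one has |ε^{−2}·D_ε(r,t) + ∂_t D_ε(r,t) − e^{−t r²}| ≤ C·ε^{2θ}·e^{−t r²/2}, where ∂_t D_ε(r,t) is the derivative of the map t ↦ D_ε(r,t). -/

import Mathlib

/-- The entire function `φ(x) = ∑_{j=0}^∞ x^j/(2j+1)!`. -/
noncomputable def phi (x : ℝ) : ℝ := ∑' j : ℕ, x ^ j / (Nat.factorial (2 * j + 1) : ℝ)

/-- The damped-wave Fourier symbol `D_ε(r,t) = e^{−t/(2ε²)}·t·φ(t²(1/(4ε⁴) − r²/ε²))`. -/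
noncomputable def D (ε r t : ℝ) : ℝ :=
  Real.exp (-t / (2 * ε ^ 2)) * t * phi (t ^ 2 * (1 / (4 * ε ^ 4) - r ^ 2 / ε ^ 2))

lemma phi_sinh (y : ℝ) : y * phi (y ^ 2) = Real.sinh y := by
  rw [Real.sinh_eq_tsum, phi, ← tsum_mul_left]
  exact tsum_congr fun j => by rw [pow_add, pow_mul]; ring

lemma D_closed (ε r l : ℝ) (hl : 0 < l) (hl2 : l ^ 2 = 1 / (4 * ε ^ 4) - r ^ 2 / ε ^ 2)
    (t : ℝ) : D ε r t = Real.exp (-t / (2 * ε ^ 2)) * (Real.sinh (l * t) / l) := by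
  unfold D
  have h : t ^ 2 * (1 / (4 * ε ^ 4) - r ^ 2 / ε ^ 2) = (l * t) ^ 2 := by
    rw [← hl2]; ring
  rw [h, mul_assoc]
  congr 1
  rw [← phi_sinh (l * t)]
  field_simp

lemma D_hasDerivAt (ε r l : ℝ) (hl : 0 < l)
    (hl2 : l ^ 2 = 1 / (4 * ε ^ 4) - r ^ 2 / ε ^ 2) (t : ℝ) :
    HasDerivAt (D ε r)
      (Real.exp (-t / (2 * ε ^ 2)) *
        (-(1 / (2 * ε ^ 2)) * (Real.sinh (l * t) / l) + Real.cosh (l * t))) t := by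
  have hfun : D ε r = fun u => Real.exp (-u / (2 * ε ^ 2)) * (Real.sinh (l * u) / l) :=
    funext (D_closed ε r l hl hl2)
  rw [hfun]
  have h1 : HasDerivAt (fun u : ℝ => Real.exp (-u / (2 * ε ^ 2)))
      (-(1 / (2 * ε ^ 2)) * Real.exp (-t / (2 * ε ^ 2))) t := by
    have := (Real.hasDerivAt_exp (-t / (2 * ε ^ 2))).comp t
      (((hasDerivAt_id t).neg).div_const (2 * ε ^ 2))
    exact this.congr_deriv (by ring)
  have h2 : HasDerivAt (fun u : ℝ => Real.sinh (l * u) / l) (Real.cosh (l * t)) t := by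
    have := ((Real.hasDerivAt_sinh (l * t)).comp t
      ((hasDerivAt_id t).const_mul l)).div_const l
    exact this.congr_deriv (by field_simp)
  have := h1.mul h2
  exact this.congr_deriv (by ring)


lemma aux_haa (ε r s σ : ℝ) (hs : s = 4*ε^2*r^2) (hσ2 : σ^2 = 1-s) :
    r^2*(2*ε^2) ≤ 1-σ := by nlinarith [sq_nonneg (1-σ)]

lemma aux_haub (ε r s σ : ℝ) (hs : s = 4*ε^2*r^2) (hσ2 : σ^2 = 1-s) (hσ0 : 0 < σ)
    (hσ1 : σ ≤ 1) : 1-σ ≤ (r^2 + r^2*s)*(2*ε^2) := by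
  nlinarith [mul_nonneg (mul_nonneg hσ0.le (by linarith : (0:ℝ) ≤ σ+2)) (sq_nonneg (σ-1))]

lemma aux_hεle (ε s P : ℝ) (hε0 : 0 < ε) (h1 : P ≤ 1) (h2 : 4*ε^2 ≤ s) (h3 : s ≤ P) :
    ε ≤ 1/2 := by nlinarith

lemma aux_hσ1 (s σ : ℝ) (hσ2 : σ^2 = 1-s) (hσ0 : 0 < σ) (hs0 : 0 < s) : σ ≤ 1 := by
  nlinarith

lemma aux_hB (c σ s P : ℝ) (hc0 : 0 < c) (hcσ : c ≤ σ) (hσ0 : 0 < σ) (hσ1 : σ ≤ 1)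
    (hσ2 : σ^2 = 1-s) (hsP : s ≤ P) : (1-σ)*(2*c) ≤ P*(2*σ) := by
  have h1 : 1 - σ ≤ s := by nlinarith
  nlinarith [mul_le_mul_of_nonneg_left hcσ (by linarith : (0:ℝ) ≤ 1-σ),
    mul_le_mul_of_nonneg_right hsP hσ0.le,
    mul_le_mul_of_nonneg_right h1 hσ0.le]

/-- For every `θ ∈ (0,1/2]` there is `C > 0` such that for `ε ∈ (0,1]`, `t ≥ 0`, `r ≥ 1`
with `2εr ≤ ε^θ`, one has
`|ε^{−2}D_ε(r,t) + ∂_t D_ε(r,t) − e^{−tr²}| ≤ C ε^{2θ} e^{−tr²/2}`. -/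
theorem dampedWave_symbol_cancellation_heat_convergence (θ : ℝ)
    (hθ : θ ∈ Set.Ioc (0:ℝ) (1/2)) :
    ∃ C : ℝ, 0 < C ∧ ∀ ε t r : ℝ, ε ∈ Set.Ioc (0:ℝ) 1 → 0 ≤ t → 1 ≤ r →
      2 * ε * r ≤ ε ^ θ →
      |D ε r t / ε ^ 2 + deriv (D ε r) t - Real.exp (-t * r ^ 2)|
        ≤ C * ε ^ (2 * θ) * Real.exp (-t * r ^ 2 / 2) := by
  obtain ⟨hθ0, hθ2⟩ := hθ
  have hhalf : (1/2:ℝ) ^ (2*θ) < 1 :=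
    Real.rpow_lt_one (by norm_num) (by norm_num) (by linarith)
  obtain ⟨c, hcdef⟩ : ∃ x : ℝ, x = Real.sqrt (1 - (1/2:ℝ) ^ (2*θ)) := ⟨_, rfl⟩
  have hc0 : 0 < c := hcdef ▸ Real.sqrt_pos.2 (by linarith)
  have hc1 : 0 < 1/c + 2 := by
    have := one_div_pos.mpr hc0; linarith
  refine ⟨1/c + 2, hc1, ?_⟩
  rintro ε t r ⟨hε0, hε1⟩ ht hr h2er
  have hεne : ε ≠ 0 := hε0.ne'
  obtain ⟨P, hPdef⟩ : ∃ x : ℝ, x = ε ^ (2*θ) := ⟨_, rfl⟩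
  have hP0 : (0:ℝ) < P := hPdef ▸ Real.rpow_pos_of_pos hε0 _
  obtain ⟨s, hsdef⟩ : ∃ x : ℝ, x = 4 * ε^2 * r^2 := ⟨_, rfl⟩
  have hr2 : 1 ≤ r^2 := by
    have := pow_le_pow_left₀ zero_le_one hr 2
    simpa using this
  have hsle : s ≤ P := by
    have h1 : (2*ε*r)^2 ≤ (ε^θ)^2 := pow_le_pow_left₀ (by positivity) h2er 2
    have h2 : (ε^θ)^2 = ε^(2*θ) := by
      rw [← Real.rpow_natCast (ε^θ) 2, ← Real.rpow_mul hε0.le]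
      norm_num [mul_comm]
    rw [hsdef, hPdef, ← h2]
    calc 4 * ε^2 * r^2 = (2*ε*r)^2 := by ring
      _ ≤ (ε^θ)^2 := h1
  have h4ε2 : 4*ε^2 ≤ s := by
    rw [hsdef]
    calc 4*ε^2 = 4*ε^2*1 := by ring
      _ ≤ 4*ε^2*r^2 := mul_le_mul_of_nonneg_left hr2 (by positivity)
  have hP1 : P ≤ 1 := hPdef ▸ Real.rpow_le_one hε0.le hε1 (by linarith)
  have hεle : ε ≤ 1/2 := aux_hεle ε s P hε0 hP1 h4ε2 hsle
  have hs1 : s < 1 := by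
    have h1 : P ≤ (1/2:ℝ)^(2*θ) := by
      rw [hPdef]; exact Real.rpow_le_rpow hε0.le hεle (by linarith)
    linarith
  have hs0 : 0 < s := by rw [hsdef]; positivity
  obtain ⟨σ, hσdef⟩ : ∃ x : ℝ, x = Real.sqrt (1-s) := ⟨_, rfl⟩
  have hσ2 : σ^2 = 1-s := hσdef ▸ Real.sq_sqrt (by linarith)
  have hσ0 : 0 < σ := hσdef ▸ Real.sqrt_pos.2 (by linarith)
  have hσ1 : σ ≤ 1 := aux_hσ1 s σ hσ2 hσ0 hs0
  have hcσ : c ≤ σ := by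
    rw [hcdef, hσdef]
    apply Real.sqrt_le_sqrt
    have h1 : P ≤ (1/2:ℝ)^(2*θ) := by
      rw [hPdef]; exact Real.rpow_le_rpow hε0.le hεle (by linarith)
    linarith
  -- closed form and derivative
  obtain ⟨l, hldef⟩ : ∃ x : ℝ, x = σ/(2*ε^2) := ⟨_, rfl⟩
  have hl0 : 0 < l := by rw [hldef]; positivity
  have hl2 : l^2 = 1/(4*ε^4) - r^2/ε^2 := by
    rw [hldef, div_pow, hσ2, hsdef]
    field_simp
    ring
  obtain ⟨aa, haadef⟩ : ∃ x : ℝ, x = (1-σ)/(2*ε^2) := ⟨_, rfl⟩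
  obtain ⟨bb, hbbdef⟩ : ∃ x : ℝ, x = (1+σ)/(2*ε^2) := ⟨_, rfl⟩
  obtain ⟨A, hAdef⟩ : ∃ x : ℝ, x = (1 + 1/σ)/2 := ⟨_, rfl⟩
  obtain ⟨B, hBdef⟩ : ∃ x : ℝ, x = (1 - 1/σ)/2 := ⟨_, rfl⟩
  have hEeq : D ε r t / ε^2 + deriv (D ε r) t
      = A * Real.exp (-aa*t) + B * Real.exp (-bb*t) := by
    rw [(D_hasDerivAt ε r l hl0 hl2 t).deriv, D_closed ε r l hl0 hl2 t,
      Real.sinh_eq, Real.cosh_eq]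
    have e1 : Real.exp (-aa*t) = Real.exp (-t/(2*ε^2)) * Real.exp (l*t) := by
      rw [← Real.exp_add]; congr 1
      rw [haadef, hldef]; field_simp; ring
    have e2 : Real.exp (-bb*t) = Real.exp (-t/(2*ε^2)) * Real.exp (-(l*t)) := by
      rw [← Real.exp_add]; congr 1
      rw [hbbdef, hldef]; field_simp; ring
    rw [e1, e2, hAdef, hBdef, hldef]
    field_simp
    ring
  rw [hEeq]
  clear hEeq
  obtain ⟨Eh, hEhdef⟩ : ∃ x : ℝ, x = Real.exp (-t*r^2) := ⟨_, rfl⟩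
  obtain ⟨F, hFdef⟩ : ∃ x : ℝ, x = Real.exp (-t*r^2/2) := ⟨_, rfl⟩
  obtain ⟨Ea, hEadef⟩ : ∃ x : ℝ, x = Real.exp (-aa*t) := ⟨_, rfl⟩
  obtain ⟨Eb, hEbdef⟩ : ∃ x : ℝ, x = Real.exp (-bb*t) := ⟨_, rfl⟩
  rw [← hEhdef, ← hFdef, ← hEadef, ← hEbdef, ← hPdef]
  have hF0 : 0 < F := hFdef ▸ Real.exp_pos _
  have hEh0 : 0 < Eh := hEhdef ▸ Real.exp_pos _
  have hEa0 : 0 < Ea := hEadef ▸ Real.exp_pos _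
  have hEb0 : 0 < Eb := hEbdef ▸ Real.exp_pos _
  -- exponent comparisons
  have haa : r^2 ≤ aa := by
    rw [haadef, le_div_iff₀ (by positivity)]
    exact aux_haa ε r s σ hsdef hσ2
  have haub : aa ≤ r^2 + r^2*s := by
    rw [haadef, div_le_iff₀ (by positivity)]
    exact aux_haub ε r s σ hsdef hσ2 hσ0 hσ1
  have hbbge : aa ≤ bb := by
    rw [haadef, hbbdef]
    gcongr
    · linarith
  have hEaEh : Ea ≤ Eh := by
    rw [hEadef, hEhdef]
    exact Real.exp_le_exp.2 (by linarith [mul_le_mul_of_nonneg_right haa ht])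
  have hEhF : Eh ≤ F := by
    rw [hEhdef, hFdef]
    exact Real.exp_le_exp.2 (by linarith [mul_nonneg ht (sq_nonneg r)])
  have hEbEa : Eb ≤ Ea := by
    rw [hEbdef, hEadef]
    exact Real.exp_le_exp.2 (by linarith [mul_le_mul_of_nonneg_right hbbge ht])
  -- bound on |B|
  have hBabs : |B| ≤ P/(2*c) := by
    have hBneg : B ≤ 0 := by
      rw [hBdef]
      have : 1 ≤ 1/σ := (one_le_div hσ0).2 hσ1
      linarith
    rw [abs_of_nonpos hBneg, hBdef]
    have heq : -((1 - 1/σ)/2) = (1-σ)/(2*σ) := by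
      field_simp
      ring
    rw [heq, div_le_div_iff₀ (by positivity) (by positivity)]
    exact aux_hB c σ s P hc0 hcσ hσ0 hσ1 hσ2 hsle
  -- term 1 : Eh - Ea ≤ 2 P F
  have hterm1 : Eh - Ea ≤ 2 * P * F := by
    have hx : Ea = Eh * Real.exp (-((aa - r^2)*t)) := by
      rw [hEadef, hEhdef, ← Real.exp_add]; congr 1; ring
    have hkey : Eh - Ea ≤ (aa - r^2)*t * Eh := by
      have h1 : 1 - Real.exp (-((aa - r^2)*t)) ≤ (aa - r^2)*t := by
        linarith [Real.add_one_le_exp (-((aa - r^2)*t))]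
      calc Eh - Ea = Eh * (1 - Real.exp (-((aa - r^2)*t))) := by rw [hx]; ring
        _ ≤ Eh * ((aa - r^2)*t) := mul_le_mul_of_nonneg_left h1 hEh0.le
        _ = (aa - r^2)*t * Eh := by ring
    have hEhFF : Eh = F * F := by
      rw [hEhdef, hFdef, ← Real.exp_add]; congr 1; ring
    have htr : t * r^2 * F ≤ 2 := by
      have h2e : t*r^2 ≤ 2*Real.exp (t*r^2/2) := by
        linarith [Real.add_one_le_exp (t*r^2/2), mul_nonneg ht (sq_nonneg r)]
      have hprod : Real.exp (t*r^2/2) * F = 1 := by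
        rw [hFdef, ← Real.exp_add, show t*r^2/2 + -t*r^2/2 = (0:ℝ) by ring,
          Real.exp_zero]
      calc t*r^2*F ≤ 2*Real.exp (t*r^2/2)*F := mul_le_mul_of_nonneg_right h2e hF0.le
        _ = 2 * (Real.exp (t*r^2/2) * F) := by ring
        _ = 2 := by rw [hprod]; ring
    have hstep : (aa - r^2)*t ≤ P * (r^2 * t) := by
      have h2 : aa - r^2 ≤ r^2 * P := by
        have := mul_le_mul_of_nonneg_left hsle (sq_nonneg r)
        linarith
      have hm := mul_le_mul_of_nonneg_right h2 ht
      linarith [hm]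
    calc Eh - Ea ≤ (aa - r^2)*t * Eh := hkey
      _ ≤ P * (r^2 * t) * Eh := mul_le_mul_of_nonneg_right hstep hEh0.le
      _ = P * (t * r^2 * F) * F := by rw [hEhFF]; ring
      _ ≤ P * 2 * F := by
          apply mul_le_mul_of_nonneg_right _ hF0.le
          exact mul_le_mul_of_nonneg_left htr hP0.le
      _ = 2 * P * F := by ring
  -- assemble
  have hA1 : A = 1 - B := by rw [hAdef, hBdef]; ring
  have hdecomp : A * Ea + B * Eb - Eh = (Ea - Eh) + B * (Eb - Ea) := by
    rw [hA1]; ring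
  have hBEa : |B * (Eb - Ea)| ≤ (P/(2*c)) * F := by
    rw [abs_mul]
    have h1 : |Eb - Ea| ≤ F := by
      rw [abs_of_nonpos (by linarith)]
      have : Ea ≤ F := hEaEh.trans hEhF
      linarith
    exact mul_le_mul hBabs h1 (abs_nonneg _) (by positivity)
  have hfin : P/(2*c)*F ≤ (P/c)*F := by
    have h1 : P/(2*c) ≤ P/c := by
      gcongr
      linarith
    exact mul_le_mul_of_nonneg_right h1 hF0.le
  calc |A * Ea + B * Eb - Eh| = |(Ea - Eh) + B * (Eb - Ea)| := by rw [hdecomp]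
    _ ≤ |Ea - Eh| + |B * (Eb - Ea)| := abs_add_le _ _
    _ ≤ (Eh - Ea) + (P/(2*c)) * F := by
        rw [abs_of_nonpos (by linarith)]
        linarith [hBEa]
    _ ≤ 2 * P * F + (P/(2*c)) * F := by linarith
    _ ≤ (1/c + 2) * P * F := by
        have h2 : (P/c)*F = (1/c)*P*F := by ring
        linarith [hfin, h2 ▸ hfin]
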